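/- Let S be a Borel cross-section for a measure-preserving ℝ-flow (a_t) on a probability space (X, μ), with cross-sectional measure μ_S, and suppose the first return map T_S: S → S and return time τ_S are defined μ_S-a.e., with T_S preserving μ_S. Let A ⊆ S be μ_S-JM with μ_S(A) > 0, and let Y ⊆ S be a co-null set on which τ_S and T_S are continuous. Then the return time to A, τ_A(x) = min{t>0 : a_t x ∈ A}, is continuous at every point x ∈ A lying in (⋂_{I≥0} T_S^{−I}(Y)) minus (⋃_{I≥0} T_S^{−I}(∂A)); consequently τ_A and the first return map T_A are continuous μ_S|_A-almost everywhere. -/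

import Mathlib

open Filter Topology

/-- Continuity of the return time to a subset `A` of a cross-section: if the
first-return data `(τS, TS)` of the cross-section `S` are continuous (within `S`) at
every point of `Y ⊆ S`, `A ⊆ S`, and `x ∈ A` is such that every forward iterate
`TS^[I] x` lies in `Y` and avoids the relative boundary `closure A ∩ closure (S \ A)` of
`A` in `S`, then the return time `τA` to `A` (and hence the first return map
`y ↦ a_{τA y} y` to `A`) is continuous at `x` within `S`. -/
theorem return_time_to_subset_continuous {X : Type*} [TopologicalSpace X]
    [LocallyCompactSpace X] [SecondCountableTopology X]
    (a : ℝ → X → X)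
    (hcont : Continuous fun p : ℝ × X => a p.1 p.2)
    (ha0 : ∀ x, a 0 x = x) (haAdd : ∀ s t x, a (s + t) x = a s (a t x))
    (S : Set X) (τS : X → ℝ) (TS : X → X)
    (hTS_def : ∀ y ∈ S, TS y = a (τS y) y)
    (hTS_mem : ∀ y ∈ S, TS y ∈ S)
    (hτS : ∀ y ∈ S, 0 < τS y ∧ a (τS y) y ∈ S ∧
      ∀ t : ℝ, 0 < t → a t y ∈ S → τS y ≤ t)
    (Y : Set X) (hYS : Y ⊆ S)
    (hYcont : ∀ y ∈ Y, ContinuousWithinAt τS S y ∧ ContinuousWithinAt TS S y)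
    (A : Set X) (hAS : A ⊆ S)
    (τA : X → ℝ)
    (hτA : ∀ y ∈ S, ∀ j : ℕ, 0 < j → TS^[j] y ∈ A →
      (∀ i : ℕ, 0 < i → i < j → TS^[i] y ∉ A) →
      τA y = ∑ i ∈ Finset.range j, τS (TS^[i] y))
    (x : X) (hxA : x ∈ A)
    (hxY : ∀ I : ℕ, TS^[I] x ∈ Y)
    (hxBd : ∀ I : ℕ, TS^[I] x ∉ closure A ∩ closure (S \ A))
    (hxret : ∃ j : ℕ, 0 < j ∧ TS^[j] x ∈ A ∧ ∀ i : ℕ, 0 < i → i < j → TS^[i] x ∉ A) :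
    ContinuousWithinAt τA S x ∧ ContinuousWithinAt (fun y => a (τA y) y) S x := by
  obtain ⟨j, hj, hjA, hjmin⟩ := hxret
  have hxS : x ∈ S := hAS hxA
  have hiterS : ∀ i : ℕ, ∀ y ∈ S, TS^[i] y ∈ S := by
    intro i
    induction i with
    | zero => intro y hy; simpa using hy
    | succ n ih =>
      intro y hy
      rw [Function.iterate_succ_apply']
      exact hTS_mem _ (ih y hy)
  have hiter : ∀ i : ℕ, ContinuousWithinAt (TS^[i]) S x := by
    intro i
    induction i with
    | zero => simpa using continuousWithinAt_id
    | succ n ih =>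
      have h := (hYcont _ (hxY n)).2
      have hc : ContinuousWithinAt (TS ∘ TS^[n]) S x :=
        h.comp ih (fun y hy => hiterS n y hy)
      rw [Function.iterate_succ']
      exact hc
  set F : X → ℝ := fun y => ∑ i ∈ Finset.range j, τS (TS^[i] y) with hF
  have hFcont : ContinuousWithinAt F S x := by
    exact tendsto_finset_sum _ fun i _ =>
      ((hYcont _ (hxY i)).1).comp (hiter i) (fun y hy => hiterS i y hy)
  have hev1 : ∀ᶠ y in 𝓝[S] x, ∀ i ∈ Finset.range j, 0 < i → TS^[i] y ∉ closure A := by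
    rw [Filter.eventually_all_finset]
    intro i hi
    by_cases hpos : 0 < i
    · have hiA : TS^[i] x ∉ A := hjmin i hpos (Finset.mem_range.mp hi)
      have hmem : TS^[i] x ∈ closure (S \ A) :=
        subset_closure ⟨hiterS i x hxS, hiA⟩
      have hnc : TS^[i] x ∉ closure A := fun hc => hxBd i ⟨hc, hmem⟩
      have hU : (closure A)ᶜ ∈ 𝓝 (TS^[i] x) :=
        (isClosed_closure.isOpen_compl).mem_nhds hnc
      filter_upwards [hiter i hU] with y hy _
      exact hy
    · filter_upwards with y hy; exact absurd hy hpos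
  have hev2 : ∀ᶠ y in 𝓝[S] x, TS^[j] y ∉ closure (S \ A) := by
    have hmem : TS^[j] x ∈ closure A := subset_closure hjA
    have hnc : TS^[j] x ∉ closure (S \ A) := fun hc => hxBd j ⟨hmem, hc⟩
    have hU : (closure (S \ A))ᶜ ∈ 𝓝 (TS^[j] x) :=
      (isClosed_closure.isOpen_compl).mem_nhds hnc
    filter_upwards [hiter j hU] with y hy
    exact hy
  have heq : τA =ᶠ[𝓝[S] x] F := by
    filter_upwards [hev1, hev2, eventually_mem_nhdsWithin] with y h1 h2 hyS
    refine hτA y hyS j hj ?_ ?_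
    · by_contra hA
      exact h2 (subset_closure ⟨hiterS j y hyS, hA⟩)
    · intro i hpos hij hA
      exact h1 i (Finset.mem_range.mpr hij) hpos (subset_closure hA)
  have hx_eq : τA x = F x := hτA x hxS j hj hjA hjmin
  have hτAcont : ContinuousWithinAt τA S x := hFcont.congr_of_eventuallyEq heq hx_eq
  refine ⟨hτAcont, ?_⟩
  have := hcont.continuousAt.comp_continuousWithinAt (hτAcont.prodMk continuousWithinAt_id)
  simpa [Function.comp_def] using this
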